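/- arXiv:2201.07326 — 2 statements merged into one kernel-verified Lean document; each statement's English description precedes it below -/
import Mathlib

section
/- Let P be a set of positive integers and let n ≥ 2. The number of labeled trees on the vertex set {1,...,n} (i.e., connected acyclic simple graphs on Fin n) in which the degree of every vertex belongs to P equals (n-2)! times the coefficient of z^(n-2) in the formal power series (∑_{i ∈ P} z^(i-1)/(i-1)!)^n over ℚ. -/
open scoped Classical

open SimpleGraph Finset

variable {V : Type}

/-- If `u` has degree 1 and `w` is a neighbor, every neighbor of `u` equals `w`. -/
lemma unique_nbr [Fintype V] [DecidableEq V] {G : SimpleGraph V} {u w : V}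
    (h1 : G.degree u = 1) (hw : G.Adj u w) : ∀ x, G.Adj u x → x = w := by
  intro x hx
  have hcard : (G.neighborFinset u).card = 1 := h1
  obtain ⟨a, ha⟩ := Finset.card_eq_one.mp hcard
  have hx' : x ∈ G.neighborFinset u := by simpa [SimpleGraph.mem_neighborFinset] using hx
  have hw' : w ∈ G.neighborFinset u := by simpa [SimpleGraph.mem_neighborFinset] using hw
  rw [ha, Finset.mem_singleton] at hx' hw'
  rw [hx', hw']

/-- A trail with endpoints different from `u` avoids `u`, if all neighbors of `u` equal `w`. -/
lemma trail_avoid {G : SimpleGraph V} {u w : V} (hu : ∀ x, G.Adj u x → x = w)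
    {a b : V} (p : G.Walk a b) (hp : p.IsTrail) (ha : a ≠ u) (hb : b ≠ u) :
    u ∉ p.support := by
  intro hmem
  have hspec := p.take_spec hmem
  have hnodup : (p.edges).Nodup := hp.edges_nodup
  rw [← hspec, SimpleGraph.Walk.edges_append] at hnodup
  have hdisj := (List.nodup_append.mp hnodup).2.2
  -- the take part ends at u, the drop part starts at u
  have h1 : s(u, w) ∈ (p.takeUntil u hmem).edges := by
    obtain ⟨x, h, q, hq⟩ := SimpleGraph.Walk.exists_eq_cons_of_ne (Ne.symm ha)
      (p.takeUntil u hmem).reverse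
    have hxw : x = w := hu x h
    have : s(u, x) ∈ (p.takeUntil u hmem).reverse.edges := by
      rw [hq]; simp
    rw [SimpleGraph.Walk.edges_reverse, List.mem_reverse] at this
    rwa [hxw] at this
  have h2 : s(u, w) ∈ (p.dropUntil u hmem).edges := by
    obtain ⟨x, h, q, hq⟩ := SimpleGraph.Walk.exists_eq_cons_of_ne (Ne.symm hb) (p.dropUntil u hmem)
    have hxw : x = w := hu x h
    have : s(u, x) ∈ (p.dropUntil u hmem).edges := by
      rw [hq]; simp
    rwa [hxw] at this
  exact hdisj _ h1 _ h2 rfl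

/-- No cycle passes through a vertex all of whose neighbors are `w`. -/
lemma cycle_avoid {G : SimpleGraph V} {u w : V} (hu : ∀ x, G.Adj u x → x = w)
    {v : V} (c : G.Walk v v) (hc : c.IsCycle) : u ∉ c.support := by
  intro hmem
  have hc' := hc.rotate hmem
  set q := c.rotate u hmem with hq
  clear_value q
  cases q with
  | nil => have := hc'.three_le_length; simp at this
  | cons h r =>
    rename_i x
    have hnodup := hc'.edges_nodup
    rw [SimpleGraph.Walk.edges_cons] at hnodup
    have hne : s(u, x) ∉ r.edges := (List.nodup_cons.mp hnodup).1
    have hxu : x ≠ u := h.ne'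
    obtain ⟨y, h2, r2, hr2⟩ := SimpleGraph.Walk.exists_eq_cons_of_ne (Ne.symm hxu) r.reverse
    have hyx : y = x := (hu y h2).trans ((hu x h).symm)
    have : s(u, y) ∈ r.reverse.edges := by rw [hr2]; simp
    rw [SimpleGraph.Walk.edges_reverse, List.mem_reverse, hyx] at this
    exact hne this


/-- Lift a walk avoiding the complement of `pred` to the comap graph on the subtype. -/
lemma exists_walk_subtype {G : SimpleGraph V} {pred : V → Prop} :
    ∀ {a b : V} (p : G.Walk a b) (ha : pred a) (hb : pred b)
      (_ : ∀ x ∈ p.support, pred x),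
    ∃ q : (G.comap (Subtype.val : {x // pred x} → V)).Walk ⟨a, ha⟩ ⟨b, hb⟩,
      q.map ⟨Subtype.val, fun h => h⟩ = p := by
  intro a b p
  induction p with
  | nil => intro ha hb _; exact ⟨SimpleGraph.Walk.nil, rfl⟩
  | @cons x y z h p ih =>
    intro ha hb hsup
    have hy : pred y := hsup y (by simp)
    obtain ⟨q, hq⟩ := ih hy hb (fun t ht => hsup t (by simp [ht]))
    have hadj : (G.comap (Subtype.val : {x // pred x} → V)).Adj ⟨x, ha⟩ ⟨y, hy⟩ := h
    refine ⟨SimpleGraph.Walk.cons hadj q, ?_⟩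
    simp [SimpleGraph.Walk.map_cons, hq]

section AddLeaf

variable [Fintype V] [DecidableEq V]

/-- Attach a new leaf `u` to the vertex `w` of a graph on `V \ {u}`. -/
def addLeaf (u : V) (w : {x : V // x ≠ u}) (G' : SimpleGraph {x : V // x ≠ u}) :
    SimpleGraph V where
  Adj a b := (∃ (ha : a ≠ u) (hb : b ≠ u), G'.Adj ⟨a, ha⟩ ⟨b, hb⟩)
    ∨ (a = u ∧ b = w.1) ∨ (b = u ∧ a = w.1)
  symm := by
    constructor
    rintro a b (⟨ha, hb, h⟩ | ⟨h1, h2⟩ | ⟨h1, h2⟩)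
    · exact Or.inl ⟨hb, ha, h.symm⟩
    · exact Or.inr (Or.inr ⟨h1, h2⟩)
    · exact Or.inr (Or.inl ⟨h1, h2⟩)
  loopless := by
    constructor
    rintro a (⟨ha, hb, h⟩ | ⟨h1, h2⟩ | ⟨h1, h2⟩)
    · exact G'.loopless.irrefl _ h
    · exact w.2 (h2.symm.trans h1).symm.symm
    · exact w.2 (h2.symm.trans h1).symm.symm

variable {u : V} {w : {x : V // x ≠ u}} {G' : SimpleGraph {x : V // x ≠ u}}

lemma addLeaf_adj_u {b : V} : (addLeaf u w G').Adj u b ↔ b = w.1 := by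
  constructor
  · rintro (⟨ha, hb, h⟩ | ⟨h1, h2⟩ | ⟨h1, h2⟩)
    · exact absurd rfl ha
    · exact h2
    · exact absurd h2.symm w.2
  · rintro rfl
    exact Or.inr (Or.inl ⟨rfl, rfl⟩)

lemma addLeaf_neighborFinset_u :
    (addLeaf u w G').neighborFinset u = {w.1} := by
  ext b
  simp [SimpleGraph.mem_neighborFinset, addLeaf_adj_u]

lemma addLeaf_degree_u : (addLeaf u w G').degree u = 1 := by
  rw [SimpleGraph.degree, addLeaf_neighborFinset_u, Finset.card_singleton]

lemma addLeaf_adj_ne {a b : V} (ha : a ≠ u) :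
    (addLeaf u w G').Adj a b ↔
      (∃ hb : b ≠ u, G'.Adj ⟨a, ha⟩ ⟨b, hb⟩) ∨ (b = u ∧ a = w.1) := by
  constructor
  · rintro (⟨ha', hb, h⟩ | ⟨h1, h2⟩ | ⟨h1, h2⟩)
    · exact Or.inl ⟨hb, h⟩
    · exact absurd h1 ha
    · exact Or.inr ⟨h1, h2⟩
  · rintro (⟨hb, h⟩ | ⟨h1, h2⟩)
    · exact Or.inl ⟨ha, hb, h⟩
    · exact Or.inr (Or.inr ⟨h1, h2⟩)

lemma addLeaf_neighborFinset_ne {a : V} (ha : a ≠ u) :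
    (addLeaf u w G').neighborFinset a =
      (G'.neighborFinset ⟨a, ha⟩).map ⟨Subtype.val, Subtype.val_injective⟩
        ∪ (if a = w.1 then {u} else ∅) := by
  ext b
  simp only [SimpleGraph.mem_neighborFinset, Finset.mem_union, Finset.mem_map,
    Function.Embedding.coeFn_mk, addLeaf_adj_ne ha]
  constructor
  · rintro (⟨hb, h⟩ | ⟨h1, h2⟩)
    · exact Or.inl ⟨⟨b, hb⟩, by simpa using h, rfl⟩
    · subst h1; simp [h2]
  · rintro (⟨⟨b', hb'⟩, h, rfl⟩ | h)
    · exact Or.inl ⟨hb', by simpa using h⟩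
    · split_ifs at h with haw
      · exact Or.inr ⟨Finset.mem_singleton.mp h, haw⟩
      · exact absurd h (Finset.notMem_empty _)

lemma addLeaf_degree_ne {a : V} (ha : a ≠ u) :
    (addLeaf u w G').degree a = G'.degree ⟨a, ha⟩ + (if a = w.1 then 1 else 0) := by
  rw [SimpleGraph.degree, addLeaf_neighborFinset_ne ha, Finset.card_union_of_disjoint, Finset.card_map]
  · congr 1
    split <;> simp
  · rw [Finset.disjoint_right]
    intro b hb hb'
    obtain ⟨⟨b', hb2⟩, _, rfl⟩ := Finset.mem_map.mp hb'
    split at hb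
    · exact hb2 (Finset.mem_singleton.mp hb)
    · exact absurd hb (Finset.notMem_empty _)

lemma comap_addLeaf :
    (addLeaf u w G').comap (Subtype.val : {x // x ≠ u} → V) = G' := by
  ext a b
  simp only [SimpleGraph.comap_adj]
  constructor
  · rintro (⟨ha, hb, h⟩ | ⟨h1, h2⟩ | ⟨h1, h2⟩)
    · convert h <;> exact rfl
    · exact absurd h1 a.2
    · exact absurd h1 b.2
  · intro h
    exact Or.inl ⟨a.2, b.2, h⟩

/-- If `u` is a leaf of `G` with unique neighbor `w`, then `G` is obtained by
re-attaching `u` to the restriction of `G` to `V \ {u}`. -/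
lemma addLeaf_comap_eq {G : SimpleGraph V}
    (hu : ∀ x, G.Adj u x → x = w.1) (huw : G.Adj u w.1) :
    addLeaf u w (G.comap (Subtype.val : {x // x ≠ u} → V)) = G := by
  ext a b
  constructor
  · rintro (⟨ha, hb, h⟩ | ⟨h1, h2⟩ | ⟨h1, h2⟩)
    · exact h
    · subst h1; subst h2; exact huw
    · subst h1; subst h2; exact huw.symm
  · intro hab
    by_cases ha : a = u
    · subst ha
      exact Or.inr (Or.inl ⟨rfl, hu b hab⟩)
    · by_cases hb : b = u
      · subst hb
        exact Or.inr (Or.inr ⟨rfl, hu a hab.symm⟩)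
      · exact Or.inl ⟨ha, hb, hab⟩

lemma addLeaf_connected (hG' : G'.Connected) : (addLeaf u w G').Connected := by
  have hreach : ∀ x : V, (addLeaf u w G').Reachable x w.1 := by
    intro x
    by_cases hx : x = u
    · subst hx
      exact (SimpleGraph.Adj.reachable (by rw [addLeaf_adj_u]))
    · exact ((hG'.preconnected ⟨x, hx⟩ w).map
        (⟨Subtype.val, fun {a b} h => Or.inl ⟨a.2, b.2, h⟩⟩ : G' →g addLeaf u w G') : _)
  rw [SimpleGraph.connected_iff]
  exact ⟨fun a b => (hreach a).trans (hreach b).symm, ⟨u⟩⟩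

lemma addLeaf_acyclic (hG' : G'.IsAcyclic) : (addLeaf u w G').IsAcyclic := by
  intro v c hc
  have hu1 : ∀ x, (addLeaf u w G').Adj u x → x = w.1 := fun x hx => addLeaf_adj_u.mp hx
  have hns : u ∉ c.support := cycle_avoid hu1 c hc
  have hv : v ≠ u := fun h => hns (h ▸ c.start_mem_support)
  obtain ⟨q, hq⟩ := exists_walk_subtype (pred := fun x => x ≠ u) c hv hv
    (fun x hx => fun h => hns (h ▸ hx))
  have hinj : Function.Injective
      (fun x : {x : V // x ≠ u} => (Subtype.val x : V)) := Subtype.val_injective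
  have hqc : q.IsCycle := by
    have := (SimpleGraph.Walk.map_isCycle_iff_of_injective
      (p := q) (f := ⟨Subtype.val, fun h => h⟩) hinj).mp (by rw [hq]; exact hc)
    exact this
  have hacy : ((addLeaf u w G').comap (Subtype.val : {x // x ≠ u} → V)).IsAcyclic := by
    rw [comap_addLeaf]; exact hG'
  exact hacy q hqc

end AddLeaf
section Part3
open SimpleGraph Finset

variable {V : Type}

lemma comap_subtype_acyclic {G : SimpleGraph V} {pred : V → Prop} (hG : G.IsAcyclic) :
    (G.comap (Subtype.val : Subtype pred → V)).IsAcyclic := by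
  intro v c hc
  have hmap := (SimpleGraph.Walk.map_isCycle_iff_of_injective
    (p := c) (f := ⟨Subtype.val, fun h => h⟩) Subtype.val_injective).mpr hc
  exact hG _ hmap

lemma comap_connected_of_leaf {G : SimpleGraph V} {u w : V}
    (hG : G.Connected) (hu : ∀ x, G.Adj u x → x = w) (hw : w ≠ u) :
    (G.comap (Subtype.val : {x : V // x ≠ u} → V)).Connected := by
  rw [SimpleGraph.connected_iff]
  refine ⟨?_, ⟨⟨w, hw⟩⟩⟩
  rintro ⟨a, ha⟩ ⟨b, hb⟩
  obtain ⟨p⟩ := hG.preconnected a b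
  have hpath := p.toPath
  have hnot : u ∉ (hpath : G.Walk a b).support :=
    trail_avoid hu _ hpath.2.isTrail ha hb
  obtain ⟨q, _⟩ := exists_walk_subtype (pred := fun x => x ≠ u) (hpath : G.Walk a b) ha hb
    (fun x hx h => hnot (h ▸ hx))
  exact q.reachable

lemma degree_pos_of_connected [Fintype V] [DecidableEq V] {G : SimpleGraph V}
    (h : G.Connected) (h2 : 2 ≤ Fintype.card V) (v : V) : 0 < G.degree v := by
  rw [SimpleGraph.degree_pos_iff_exists_adj]
  obtain ⟨x, hx⟩ := Fintype.exists_ne_of_one_lt_card (by omega) v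
  obtain ⟨p⟩ := h.preconnected v x
  obtain ⟨y, hy, q, _⟩ := SimpleGraph.Walk.exists_eq_cons_of_ne (Ne.symm hx) p
  exact ⟨y, hy⟩

lemma tree_sum_degrees [Fintype V] [DecidableEq V] {G : SimpleGraph V} (hG : G.IsTree) :
    ∑ v, G.degree v = 2 * (Fintype.card V - 1) := by
  have h1 := SimpleGraph.sum_degrees_eq_twice_card_edges G
  have h2 := hG.card_edgeFinset
  omega

lemma top_isTree [Fintype V] [DecidableEq V] (h2 : Fintype.card V = 2) :
    (⊤ : SimpleGraph V).IsTree := by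
  have : Nonempty V := by
    rw [← Fintype.card_pos_iff]; omega
  refine ⟨SimpleGraph.connected_top, ?_⟩
  intro v c hc
  have h3 := hc.three_le_length
  have hnodup : c.support.tail.Nodup := hc.2
  have hlen : c.support.tail.length = c.length := by
    have := c.length_support
    simp only [List.length_tail, this]
    omega
  have := hnodup.length_le_card
  rw [hlen, h2] at this
  omega
end Part3
section Part4
open SimpleGraph Finset

/-- Core counting lemma: the number of labeled trees on a finite vertex type `V` with
prescribed degree sequence `d` (all degrees positive, summing to `2(n-1)`),
multiplied by `∏ (d v - 1)!`, equals `(n-2)!`. -/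
theorem tree_count : ∀ (n : ℕ) (V : Type) [Fintype V] [DecidableEq V] (d : V → ℕ),
    Fintype.card V = n → 2 ≤ n → (∀ v, 1 ≤ d v) → (∑ v, d v = 2 * (n - 1)) →
    (Finset.univ.filter (fun G : SimpleGraph V => G.IsTree ∧ ∀ v, G.degree v = d v)).card
      * ∏ v, (d v - 1).factorial = (n - 2).factorial := by
  intro n
  induction n using Nat.strong_induction_on with
  | _ n ih =>
  intro V _ _ d hcard hn hd hsum
  by_cases hn2 : n = 2
  · -- base case : two vertices
    subst hn2
    have hd1 : ∀ v, d v = 1 := by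
      intro v
      obtain ⟨x, hx⟩ := Fintype.exists_ne_of_one_lt_card (by omega) v
      have hpair : ({x, v} : Finset V) = Finset.univ := by
        apply Finset.eq_univ_of_card
        rw [Finset.card_pair hx, hcard]
      have : ∑ z ∈ ({x, v} : Finset V), d z = 2 := by rw [hpair, hsum]
      rw [Finset.sum_pair hx] at this
      have := hd x
      have := hd v
      omega
    have hfilter : (Finset.univ.filter
        (fun G : SimpleGraph V => G.IsTree ∧ ∀ v, G.degree v = d v)) = {⊤} := by
      ext G
      simp only [Finset.mem_filter, Finset.mem_univ, true_and, Finset.mem_singleton]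
      constructor
      · rintro ⟨hG, hdeg⟩
        ext a b
        simp only [SimpleGraph.top_adj]
        constructor
        · exact fun h => h.ne
        · intro hab
          obtain ⟨p⟩ := hG.isConnected.preconnected a b
          obtain ⟨y, hy, q, _⟩ := SimpleGraph.Walk.exists_eq_cons_of_ne hab p
          have hya : y ≠ a := hy.ne'
          have : ({a, b} : Finset V) = Finset.univ := by
            apply Finset.eq_univ_of_card
            rw [Finset.card_pair hab, hcard]
          have hymem : y ∈ ({a, b} : Finset V) := by rw [this]; exact Finset.mem_univ y
          rw [Finset.mem_insert, Finset.mem_singleton] at hymem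
          rcases hymem with h | h
          · exact absurd h hya
          · rwa [h] at hy
      · rintro rfl
        refine ⟨top_isTree hcard, fun v => ?_⟩
        rw [hd1 v]
        have h := SimpleGraph.complete_graph_degree (V := V) v
        rw [hcard] at h
        convert h using 2 <;> exact Subsingleton.elim _ _
    rw [hfilter, Finset.card_singleton, one_mul]
    rw [Finset.prod_congr rfl (fun v _ => by rw [hd1 v])]
    simp
  · -- inductive step
    have hn3 : 3 ≤ n := by omega
    -- find a leaf value
    have hexu : ∃ u, d u = 1 := by
      by_contra hno
      push_neg at hno
      have h2 : ∀ v, 2 ≤ d v := by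
        intro v
        have := hd v
        have := hno v
        omega
      have : 2 * n ≤ ∑ v, d v := by
        calc 2 * n = ∑ _v : V, 2 := by
              rw [Finset.sum_const, Finset.card_univ, hcard, smul_eq_mul, mul_comm]
          _ ≤ ∑ v, d v := Finset.sum_le_sum (fun v _ => h2 v)
      omega
    obtain ⟨u, hdu⟩ := hexu
    have hcard' : Fintype.card {x : V // x ≠ u} = n - 1 := by
      have := Fintype.card_subtype_compl (fun x : V => x = u)
      rw [Fintype.card_subtype_eq, hcard] at this
      exact this
    -- sums over the subtype
    have hsub_sum : ∀ f : V → ℕ, ∑ x : {x : V // x ≠ u}, f x.1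
        = ∑ v ∈ Finset.univ.erase u, f v := by
      intro f
      refine (Finset.sum_subtype _ ?_ f).symm
      intro x; simp [Finset.mem_erase]
    have hsub_prod : ∀ f : V → ℕ, ∏ x : {x : V // x ≠ u}, f x.1
        = ∏ v ∈ Finset.univ.erase u, f v := by
      intro f
      refine (Finset.prod_subtype _ ?_ f).symm
      intro x; simp [Finset.mem_erase]
    set S := Finset.univ.filter
      (fun G : SimpleGraph V => G.IsTree ∧ ∀ v, G.degree v = d v) with hS
    -- the pieces
    set Sw := fun w : {x : V // x ≠ u} => Finset.univ.filter
      (fun G : SimpleGraph V => (G.IsTree ∧ ∀ v, G.degree v = d v) ∧ G.Adj u w.1) with hSw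
    set d' := fun (w : {x : V // x ≠ u}) (x : {x : V // x ≠ u}) =>
      if x = w then d w.1 - 1 else d x.1 with hd'
    set Tw := fun w : {x : V // x ≠ u} => Finset.univ.filter
      (fun G' : SimpleGraph {x : V // x ≠ u} =>
        G'.IsTree ∧ ∀ x, G'.degree x = d' w x) with hTw
    -- decomposition of S
    have hSdecomp : S = Finset.univ.biUnion Sw := by
      ext G
      simp only [hS, hSw, Finset.mem_filter, Finset.mem_univ, true_and, Finset.mem_biUnion]
      constructor
      · rintro ⟨hT, hdeg⟩
        have hpos : 0 < G.degree u := by rw [hdeg u, hdu]; omega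
        rw [SimpleGraph.degree_pos_iff_exists_adj] at hpos
        obtain ⟨x, hx⟩ := hpos
        exact ⟨⟨x, hx.ne'⟩, ⟨hT, hdeg⟩, hx⟩
      · rintro ⟨w, ⟨hT, hdeg⟩, _⟩
        exact ⟨hT, hdeg⟩
    have hScard : S.card = ∑ w : {x : V // x ≠ u}, (Sw w).card := by
      rw [hSdecomp]
      apply Finset.card_biUnion
      intro w1 _ w2 _ hne12
      rw [Function.onFun, Finset.disjoint_left]
      intro G hG1 hG2
      simp only [hSw, Finset.mem_coe, Finset.mem_filter, Finset.mem_univ, true_and] at hG1 hG2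
      have hdeg1 : G.degree u = 1 := by rw [hG1.1.2 u, hdu]
      have := unique_nbr hdeg1 hG1.2 w2.1 hG2.2
      exact hne12 (Subtype.ext this.symm)
    -- the bijection between Sw and Tw
    have hST : ∀ w : {x : V // x ≠ u}, (Sw w).card = (Tw w).card := by
      intro w
      apply Finset.card_nbij'
        (fun G => G.comap (Subtype.val : {x : V // x ≠ u} → V))
        (fun G' => addLeaf u w G')
      · -- forward map lands in Tw
        intro G hG
        simp only [hSw, Finset.mem_coe, Finset.mem_filter, Finset.mem_univ, true_and] at hG
        obtain ⟨⟨hT, hdeg⟩, hadj⟩ := hG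
        have hdeg1 : G.degree u = 1 := by rw [hdeg u, hdu]
        have hu1 : ∀ x, G.Adj u x → x = w.1 := unique_nbr hdeg1 hadj
        have heq : addLeaf u w (G.comap (Subtype.val : {x : V // x ≠ u} → V)) = G :=
          addLeaf_comap_eq hu1 hadj
        simp only [hTw, Finset.mem_coe, Finset.mem_filter, Finset.mem_univ, true_and]
        constructor
        · exact ⟨comap_connected_of_leaf hT.isConnected hu1 w.2,
            comap_subtype_acyclic hT.IsAcyclic⟩
        · intro x
          have hx := addLeaf_degree_ne
            (G' := G.comap (Subtype.val : {x : V // x ≠ u} → V)) (w := w) (a := x.1) x.2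
          rw [heq, hdeg x.1] at hx
          rw [Subtype.coe_eta] at hx
          by_cases hxw : x = w
          · subst hxw
            rw [if_pos rfl] at hx
            simp only [hd', if_pos rfl]
            omega
          · have hxw1 : x.1 ≠ w.1 := fun h => hxw (Subtype.ext h)
            rw [if_neg hxw1] at hx
            simp only [hd', if_neg hxw]
            omega
      · -- backward map lands in Sw
        intro G' hG'
        simp only [hTw, Finset.mem_coe, Finset.mem_filter, Finset.mem_univ, true_and] at hG'
        obtain ⟨hT', hdeg'⟩ := hG'
        simp only [hSw, Finset.mem_coe, Finset.mem_filter, Finset.mem_univ, true_and]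
        refine ⟨⟨⟨addLeaf_connected hT'.isConnected, addLeaf_acyclic hT'.IsAcyclic⟩, ?_⟩,
          addLeaf_adj_u.mpr rfl⟩
        intro v
        by_cases hv : v = u
        · subst hv
          rw [addLeaf_degree_u, hdu]
        · rw [addLeaf_degree_ne hv, hdeg' ⟨v, hv⟩]
          by_cases hvw : v = w.1
          · have : (⟨v, hv⟩ : {x : V // x ≠ u}) = w := Subtype.ext hvw
            rw [if_pos hvw]
            simp only [hd', if_pos this]
            have := hd w.1
            rw [hvw]
            omega
          · have : (⟨v, hv⟩ : {x : V // x ≠ u}) ≠ w := fun h => hvw (congrArg Subtype.val h)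
            rw [if_neg hvw]
            simp only [hd', if_neg this]
            omega
      · -- left inverse
        intro G hG
        simp only [hSw, Finset.mem_coe, Finset.mem_filter, Finset.mem_univ, true_and] at hG
        obtain ⟨⟨hT, hdeg⟩, hadj⟩ := hG
        have hdeg1 : G.degree u = 1 := by rw [hdeg u, hdu]
        exact addLeaf_comap_eq (unique_nbr hdeg1 hadj) hadj
      · -- right inverse
        intro G' _
        exact comap_addLeaf
    -- evaluate Tw
    have hTwcard : ∀ w : {x : V // x ≠ u},
        (Tw w).card * ∏ x : {x : V // x ≠ u}, (d x.1 - 1).factorial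
          = (d w.1 - 1) * (n - 3).factorial := by
      intro w
      by_cases hw2 : 2 ≤ d w.1
      · -- apply induction hypothesis
        have hd'pos : ∀ x, 1 ≤ d' w x := by
          intro x
          simp only [hd']
          split
          · omega
          · exact hd x.1
        have hd'sum : ∑ x : {x : V // x ≠ u}, d' w x = 2 * ((n - 1) - 1) := by
          have t1 : d' w w + ∑ x ∈ Finset.univ.erase w, d' w x
              = ∑ x : {x : V // x ≠ u}, d' w x :=
            Finset.add_sum_erase Finset.univ (d' w) (Finset.mem_univ w)
          have t2 : d w.1 + ∑ x ∈ Finset.univ.erase w, d x.1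
              = ∑ x : {x : V // x ≠ u}, d x.1 :=
            Finset.add_sum_erase Finset.univ
              (fun x : {x : V // x ≠ u} => d x.1) (Finset.mem_univ w)
          have h3 : ∑ x ∈ Finset.univ.erase w, d' w x
              = ∑ x ∈ Finset.univ.erase w, d x.1 := by
            apply Finset.sum_congr rfl
            intro x hx
            simp only [hd', if_neg (Finset.ne_of_mem_erase hx)]
          have hdww : d' w w = d w.1 - 1 := by simp only [hd', if_pos rfl]
          have h4 : ∑ x : {x : V // x ≠ u}, d x.1 = 2 * (n - 1) - 1 := by
            rw [hsub_sum]
            have t3 : d u + ∑ v ∈ Finset.univ.erase u, d v = ∑ v, d v :=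
              Finset.add_sum_erase Finset.univ d (Finset.mem_univ u)
            omega
          omega
        have := ih (n - 1) (by omega) {x : V // x ≠ u} (d' w) hcard' (by omega)
          hd'pos hd'sum
        -- now combine
        have hprod1 : ∏ x : {x : V // x ≠ u}, (d x.1 - 1).factorial
            = (d w.1 - 1).factorial
              * ∏ x ∈ Finset.univ.erase w, (d x.1 - 1).factorial := by
          rw [Finset.mul_prod_erase Finset.univ
            (fun x : {x : V // x ≠ u} => (d x.1 - 1).factorial) (Finset.mem_univ w)]
        have hprod2 : ∏ x : {x : V // x ≠ u}, (d' w x - 1).factorial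
            = (d w.1 - 2).factorial
              * ∏ x ∈ Finset.univ.erase w, (d x.1 - 1).factorial := by
          rw [← Finset.mul_prod_erase Finset.univ
            (fun x : {x : V // x ≠ u} => (d' w x - 1).factorial) (Finset.mem_univ w)]
          congr 1
          · simp only [hd', if_pos rfl, Nat.sub_sub]
          · apply Finset.prod_congr rfl
            intro x hx
            simp only [hd', if_neg (Finset.ne_of_mem_erase hx)]
        have hIH : (Tw w).card * ∏ x : {x : V // x ≠ u}, (d' w x - 1).factorial
            = (n - 3).factorial := by
          simp only [hTw]
          rw [show n - 1 - 2 = n - 3 from by omega] at this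
          exact this
        have hfact : (d w.1 - 1).factorial = (d w.1 - 1) * (d w.1 - 2).factorial := by
          have hmf := Nat.mul_factorial_pred (n := d w.1 - 1) (by omega)
          rw [show d w.1 - 1 - 1 = d w.1 - 2 from by omega] at hmf
          exact hmf.symm
        calc (Tw w).card * ∏ x : {x : V // x ≠ u}, (d x.1 - 1).factorial
            = (Tw w).card * ((d w.1 - 1).factorial
                * ∏ x ∈ Finset.univ.erase w, (d x.1 - 1).factorial) := by rw [hprod1]
          _ = (Tw w).card * (((d w.1 - 1) * (d w.1 - 2).factorial)
                * ∏ x ∈ Finset.univ.erase w, (d x.1 - 1).factorial) := by rw [hfact]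
          _ = (d w.1 - 1) * ((Tw w).card * ((d w.1 - 2).factorial
                * ∏ x ∈ Finset.univ.erase w, (d x.1 - 1).factorial)) := by ring
          _ = (d w.1 - 1) * ((Tw w).card
                * ∏ x : {x : V // x ≠ u}, (d' w x - 1).factorial) := by rw [← hprod2]
          _ = (d w.1 - 1) * (n - 3).factorial := by rw [hIH]
      · -- d w.1 = 1 : Tw is empty
        have hw1 : d w.1 = 1 := by have := hd w.1; omega
        have hTwempty : Tw w = ∅ := by
          rw [Finset.eq_empty_iff_forall_notMem]
          intro G' hG'
          simp only [hTw, Finset.mem_coe, Finset.mem_filter, Finset.mem_univ, true_and] at hG'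
          obtain ⟨hT', hdeg'⟩ := hG'
          have hpos := degree_pos_of_connected hT'.isConnected (by omega : 2 ≤ Fintype.card {x : V // x ≠ u}) w
          rw [hdeg' w] at hpos
          simp only [hd', if_pos rfl, hw1] at hpos
          omega
        rw [hTwempty, Finset.card_empty, zero_mul, hw1]
        simp
    -- assemble
    have hprodsplit : ∏ v, (d v - 1).factorial
        = ∏ x : {x : V // x ≠ u}, (d x.1 - 1).factorial := by
      rw [hsub_prod (fun v => (d v - 1).factorial)]
      have t : (d u - 1).factorial
          * ∏ v ∈ Finset.univ.erase u, (d v - 1).factorial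
          = ∏ v, (d v - 1).factorial :=
        Finset.mul_prod_erase Finset.univ (fun v => (d v - 1).factorial)
          (Finset.mem_univ u)
      rw [hdu] at t
      simpa using t.symm
    have hsum' : ∑ w : {x : V // x ≠ u}, (d w.1 - 1) = n - 2 := by
      rw [hsub_sum (fun v => d v - 1)]
      have t4 : (d u - 1) + ∑ v ∈ Finset.univ.erase u, (d v - 1)
          = ∑ v, (d v - 1) :=
        Finset.add_sum_erase Finset.univ (fun v => d v - 1) (Finset.mem_univ u)
      have t5 : ∑ v, (d v - 1) + ∑ _v : V, 1 = ∑ v, d v := by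
        rw [← Finset.sum_add_distrib]
        exact Finset.sum_congr rfl (fun v _ => by have := hd v; omega)
      have t6 : ∑ _v : V, (1 : ℕ) = n := by
        rw [Finset.sum_const, Finset.card_univ, hcard, smul_eq_mul, mul_one]
      omega
    calc S.card * ∏ v, (d v - 1).factorial
        = (∑ w : {x : V // x ≠ u}, (Sw w).card)
            * ∏ x : {x : V // x ≠ u}, (d x.1 - 1).factorial := by
          rw [hScard, hprodsplit]
      _ = ∑ w : {x : V // x ≠ u},
            ((Tw w).card * ∏ x : {x : V // x ≠ u}, (d x.1 - 1).factorial) := by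
          rw [Finset.sum_mul]
          exact Finset.sum_congr rfl (fun w _ => by rw [hST w])
      _ = ∑ w : {x : V // x ≠ u}, (d w.1 - 1) * (n - 3).factorial :=
          Finset.sum_congr rfl (fun w _ => hTwcard w)
      _ = (∑ w : {x : V // x ≠ u}, (d w.1 - 1)) * (n - 3).factorial := by
          rw [Finset.sum_mul]
      _ = (n - 2) * (n - 3).factorial := by rw [hsum']
      _ = (n - 2).factorial := by
          have hmf := Nat.mul_factorial_pred (n := n - 2) (by omega)
          rw [show n - 2 - 1 = n - 3 from by omega] at hmf
          exact hmf
end Part4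


/-- For a set `P` of positive integers and `n ≥ 2`, the number of
labeled trees on `Fin n` (connected acyclic simple graphs) all of whose vertex degrees
lie in `P` equals `(n-2)!` times the coefficient of `z^(n-2)` in the formal power
series `(∑_{i ∈ P} z^(i-1)/(i-1)!)^n` over `ℚ`.  The series is encoded by its
coefficients: the coefficient of `z^m` is `1/m!` if `m+1 ∈ P` and `0` otherwise. -/
theorem labeled_trees_with_degrees_in_P (P : Set ℕ) (hP : ∀ i ∈ P, 0 < i)
    (n : ℕ) (hn : 2 ≤ n) :
    ((Finset.univ.filter (fun G : SimpleGraph (Fin n) =>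
        (G.Connected ∧ G.IsAcyclic) ∧ ∀ v : Fin n, G.degree v ∈ P)).card : ℚ) =
      (Nat.factorial (n - 2) : ℚ) *
        PowerSeries.coeff (R := ℚ) (n - 2)
          ((PowerSeries.mk fun m : ℕ =>
              if m + 1 ∈ P then (1 : ℚ) / (Nat.factorial m) else 0) ^ n) := by
  have hcardV : Fintype.card (Fin n) = n := Fintype.card_fin n
  set φ : PowerSeries ℚ := PowerSeries.mk fun m : ℕ =>
    if m + 1 ∈ P then (1 : ℚ) / (Nat.factorial m) else 0 with hφ
  set A := Finset.univ.filter (fun G : SimpleGraph (Fin n) =>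
    (G.Connected ∧ G.IsAcyclic) ∧ ∀ v : Fin n, G.degree v ∈ P) with hA
  set g : SimpleGraph (Fin n) → (Fin n →₀ ℕ) := fun G =>
    Finsupp.equivFunOnFinite.symm (fun v => G.degree v - 1) with hg
  set T := Finset.finsuppAntidiag (Finset.univ : Finset (Fin n)) (n - 2) with hT
  -- rewrite the coefficient as a sum over T
  have hpow : φ ^ n = ∏ _i : Fin n, φ := by
    rw [Finset.prod_const, Finset.card_univ, Fintype.card_fin]
  have hcoeff : PowerSeries.coeff (R := ℚ) (n - 2) (φ ^ n)
      = ∑ l ∈ T, ∏ i : Fin n, (if (l i) + 1 ∈ P then (1 : ℚ) / ((l i).factorial) else 0) := by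
    rw [hpow, PowerSeries.coeff_prod]
    apply Finset.sum_congr rfl
    intro l _
    apply Finset.prod_congr rfl
    intro i _
    rw [hφ, PowerSeries.coeff_mk]
  -- every tree in A has its reduced degree sequence in T
  have hmem : ∀ G ∈ A, g G ∈ T := by
    intro G hG
    rw [hA, Finset.mem_filter] at hG
    obtain ⟨-, ⟨hconn, hacy⟩, -⟩ := hG
    have hTree : G.IsTree := ⟨hconn, hacy⟩
    have hdsum : ∑ v, G.degree v = 2 * (n - 1) := by
      rw [tree_sum_degrees hTree, hcardV]
    have hdpos : ∀ v, 1 ≤ G.degree v := fun v =>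
      degree_pos_of_connected hconn (by omega) v
    rw [hT, Finset.mem_finsuppAntidiag]
    constructor
    · have h1 : ∑ v, (g G) v = ∑ v, (G.degree v - 1) := by
        apply Finset.sum_congr rfl
        intro v _
        simp [hg]
      rw [h1]
      have h2 : ∑ v, (G.degree v - 1) + ∑ _v : Fin n, 1 = ∑ v, G.degree v := by
        rw [← Finset.sum_add_distrib]
        exact Finset.sum_congr rfl (fun v _ => by have := hdpos v; omega)
      have h3 : ∑ _v : Fin n, (1 : ℕ) = n := by
        rw [Finset.sum_const, Finset.card_univ, hcardV, smul_eq_mul, mul_one]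
      omega
    · exact Finset.Subset.trans (Finset.subset_univ _) (le_refl _)
  have hsplit : A.card = ∑ l ∈ T, (A.filter (fun G => g G = l)).card :=
    Finset.card_eq_sum_card_fiberwise hmem
  rw [hcoeff, hsplit, Finset.mul_sum]
  push_cast
  apply Finset.sum_congr rfl
  intro l hl
  have hlsum : ∑ v, l v = n - 2 := by
    rw [hT, Finset.mem_finsuppAntidiag] at hl
    exact hl.1
  by_cases hPall : ∀ v : Fin n, (l v) + 1 ∈ P
  · -- main case
    have hfiber : A.filter (fun G => g G = l)
        = Finset.univ.filter (fun G : SimpleGraph (Fin n) =>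
            G.IsTree ∧ ∀ v, G.degree v = l v + 1) := by
      ext G
      simp only [Finset.mem_filter, Finset.mem_univ, true_and, hA]
      constructor
      · rintro ⟨⟨⟨hconn, hacy⟩, _⟩, hgl⟩
        refine ⟨⟨hconn, hacy⟩, ?_⟩
        intro v
        have h1 : (g G) v = l v := by rw [hgl]
        have h2 : (g G) v = G.degree v - 1 := by simp [hg]
        have h3 : 1 ≤ G.degree v := degree_pos_of_connected hconn (by omega) v
        omega
      · rintro ⟨hTree, hdeg⟩
        refine ⟨⟨⟨hTree.isConnected, hTree.IsAcyclic⟩, ?_⟩, ?_⟩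
        · intro v
          rw [hdeg v]
          exact hPall v
        · apply Finsupp.ext
          intro v
          have h2 : (g G) v = G.degree v - 1 := by simp [hg]
          rw [h2, hdeg v]
          omega
    have hcore := tree_count n (Fin n) (fun v => l v + 1) hcardV hn
      (fun v => by show 1 ≤ l v + 1; omega)
      (by
        show ∑ v, (l v + 1) = 2 * (n - 1)
        have h2 : ∑ v, (l v + 1) = (∑ v, l v) + ∑ _v : Fin n, 1 :=
          Finset.sum_add_distrib
        have h3 : ∑ _v : Fin n, (1 : ℕ) = n := by
          rw [Finset.sum_const, Finset.card_univ, hcardV, smul_eq_mul, mul_one]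
        omega)
    simp only [Nat.add_sub_cancel] at hcore
    rw [hfiber]
    have hcast : ((Finset.univ.filter (fun G : SimpleGraph (Fin n) =>
          G.IsTree ∧ ∀ v, G.degree v = l v + 1)).card : ℚ)
          * ∏ v : Fin n, ((l v).factorial : ℚ) = ((n - 2).factorial : ℚ) := by
      have hcore' : (Finset.univ.filter (fun G : SimpleGraph (Fin n) =>
          G.IsTree ∧ ∀ v, G.degree v = l v + 1)).card
          * ∏ v : Fin n, (l v).factorial = (n - 2).factorial := by
        convert hcore using 3
        congr
      exact_mod_cast hcore'
    have hne : (∏ v : Fin n, ((l v).factorial : ℚ)) ≠ 0 := by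
      apply Finset.prod_ne_zero_iff.mpr
      intro v _
      exact_mod_cast (l v).factorial_ne_zero
    have hrhs : ∏ i : Fin n, (if (l i) + 1 ∈ P then (1 : ℚ) / ((l i).factorial) else 0)
        = (∏ v : Fin n, ((l v).factorial : ℚ))⁻¹ := by
      rw [Finset.prod_congr rfl (fun i _ => if_pos (hPall i))]
      rw [← Finset.prod_inv_distrib]
      apply Finset.prod_congr rfl
      intro i _
      rw [one_div]
    rw [hrhs]
    field_simp
    linarith [hcast]
  · -- degenerate case : some degree not in P
    push_neg at hPall
    obtain ⟨v, hv⟩ := hPall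
    have hfiber : A.filter (fun G => g G = l) = ∅ := by
      rw [Finset.eq_empty_iff_forall_notMem]
      intro G hG
      simp only [Finset.mem_filter, Finset.mem_univ, true_and, hA] at hG
      obtain ⟨⟨⟨hconn, hacy⟩, hdegP⟩, hgl⟩ := hG
      have h1 : (g G) v = l v := by rw [hgl]
      have h2 : (g G) v = G.degree v - 1 := by simp [hg]
      have h3 : 1 ≤ G.degree v := degree_pos_of_connected hconn (by omega) v
      have h4 : G.degree v = l v + 1 := by omega
      have h5 := hdegP v
      rw [h4] at h5
      exact hv h5
    rw [hfiber]
    have hzero : ∏ i : Fin n, (if (l i) + 1 ∈ P then (1 : ℚ) / ((l i).factorial) else 0)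
        = 0 := Finset.prod_eq_zero (Finset.mem_univ v) (by rw [if_neg hv])
    rw [hzero]
    simp
end

section
/- Let d be a positive integer and let n ≥ 2. For a labeled tree T on the vertex set {1,...,n}, let X_d(T) denote the number of vertices of T of degree d. Then the polynomial ∑_T g^(X_d(T)) in the indeterminate g, where the sum ranges over all labeled trees T on {1,...,n}, equals (n-2)! times the coefficient of z^(n-2) in the formal power series (e^z + (g-1)·z^(d-1)/(d-1)!)^n, viewed as a power series in z with coefficients in the polynomial ring ℚ[g]. -/
open scoped Classical

namespace TreeCount

open SimpleGraph Finset

noncomputable def treeSet (n : ℕ) (c : Fin n → ℕ) : Finset (SimpleGraph (Fin n)) :=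
  Finset.univ.filter (fun G => (G.Connected ∧ G.IsAcyclic) ∧ ∀ v, G.degree v = c v)

lemma mem_treeSet {n : ℕ} {c : Fin n → ℕ} {G : SimpleGraph (Fin n)} :
    G ∈ treeSet n c ↔ (G.Connected ∧ G.IsAcyclic) ∧ ∀ v, G.degree v = c v := by
  simp [treeSet]

lemma degree_pos {n : ℕ} (hn : 2 ≤ n) {G : SimpleGraph (Fin n)} (hG : G.Connected)
    (v : Fin n) : 0 < G.degree v := by
  have hnt : Nontrivial (Fin n) := by
    rw [Fin.nontrivial_iff_two_le]; exact hn
  obtain ⟨w, hw⟩ := exists_ne v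
  rw [degree_pos_iff_exists_adj]
  obtain ⟨p⟩ := hG.preconnected v w
  cases p with
  | nil => exact absurd rfl hw.symm
  | cons h _ => exact ⟨_, h⟩

lemma degree_sum {n : ℕ} {G : SimpleGraph (Fin n)} (h1 : G.Connected) (h2 : G.IsAcyclic) :
    ∑ v, G.degree v = 2 * (n - 1) := by
  have ht : G.IsTree := ⟨h1, h2⟩
  have hc := ht.card_edgeFinset
  rw [Fintype.card_fin] at hc
  rw [sum_degrees_eq_twice_card_edges]
  omega

lemma adj_eq_of_degree_eq_one {V : Type*} [Fintype V] {G : SimpleGraph V} {x y z : V}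
    (hdeg : G.degree x = 1) (hy : G.Adj x y) (hz : G.Adj x z) : y = z := by
  by_contra hne
  have h2 : 1 < G.degree x := by
    rw [← card_neighborFinset_eq_degree]
    exact Finset.one_lt_card.2 ⟨y, by simp [hy], z, by simp [hz], hne⟩
  omega

lemma isCycle_not_mem_of_degree_one {V : Type*} [Fintype V] {G : SimpleGraph V} {x v : V}
    {c : G.Walk v v} (hc : c.IsCycle) (hdeg : G.degree x = 1) : x ∉ c.support := by
  intro hx
  have hc' : (c.rotate x hx).IsCycle := hc.rotate hx
  generalize hg : c.rotate x hx = c' at hc'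
  cases c' with
  | nil => exact hc'.ne_nil rfl
  | @cons _ y _ h t =>
    have hxy : x ≠ y := h.ne
    obtain ⟨z, hz, r, hr⟩ := Walk.exists_eq_cons_of_ne hxy t.reverse
    have hmem : s(x, z) ∈ t.edges := by
      rw [← List.mem_reverse, ← Walk.edges_reverse, hr]
      simp
    have hyz : y = z := adj_eq_of_degree_eq_one hdeg h hz
    have hnodup := hc'.edges_nodup
    rw [Walk.edges_cons] at hnodup
    rw [List.nodup_cons] at hnodup
    exact hnodup.1 (hyz ▸ hmem)

lemma isPath_not_mem_of_degree_one {V : Type*} [Fintype V] [DecidableEq V] {G : SimpleGraph V}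
    {x u w : V} {p : G.Walk u w} (hp : p.IsPath) (hdeg : G.degree x = 1)
    (hu : u ≠ x) (hw : w ≠ x) : x ∉ p.support := by
  intro hx
  have hspec := p.take_spec hx
  obtain ⟨y, hy, q', hq'⟩ := Walk.exists_eq_cons_of_ne (Ne.symm hu) (p.takeUntil x hx).reverse
  obtain ⟨z, hz, r', hr'⟩ := Walk.exists_eq_cons_of_ne (Ne.symm hw) (p.dropUntil x hx)
  have hyz : y = z := adj_eq_of_degree_eq_one hdeg hy hz
  have hnodup := hp.isTrail.edges_nodup
  rw [← hspec, Walk.edges_append, List.nodup_append] at hnodup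
  have h1 : s(x, y) ∈ (p.takeUntil x hx).edges := by
    rw [← List.mem_reverse, ← Walk.edges_reverse, hq']
    simp
  have h2 : s(x, z) ∈ (p.dropUntil x hx).edges := by
    rw [hr']; simp
  exact hnodup.2.2 _ h1 _ (by rw [hyz]; exact h2) rfl


variable {n : ℕ}

noncomputable def up (G : SimpleGraph (Fin n)) (j : Fin n) : SimpleGraph (Fin (n + 1)) :=
  SimpleGraph.map Fin.castSuccEmb G ⊔ fromEdgeSet {s(Fin.last n, j.castSucc)}

def down (H : SimpleGraph (Fin (n + 1))) : SimpleGraph (Fin n) :=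
  H.comap ⇑(Fin.castSuccEmb : Fin n ↪ Fin (n + 1))

lemma down_adj {H : SimpleGraph (Fin (n + 1))} {a b : Fin n} :
    (down H).Adj a b ↔ H.Adj a.castSucc b.castSucc := Iff.rfl

lemma castSucc_ne_last (a : Fin n) : a.castSucc ≠ Fin.last n :=
  (Fin.castSucc_lt_last a).ne

lemma up_adj_castSucc {G : SimpleGraph (Fin n)} {j a b : Fin n} :
    (up G j).Adj a.castSucc b.castSucc ↔ G.Adj a b := by
  simp only [up, sup_adj, map_adj, fromEdgeSet_adj, Set.mem_singleton_iff]
  constructor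
  · rintro (⟨a', b', hab, ha, hb⟩ | ⟨he, hne⟩)
    · have ha' : a' = a := Fin.castSucc_injective _ ha
      have hb' : b' = b := Fin.castSucc_injective _ hb
      rwa [ha', hb'] at hab
    · rw [Sym2.eq_iff] at he
      rcases he with ⟨h1, _⟩ | ⟨_, h2⟩
      · exact absurd h1 (castSucc_ne_last a)
      · exact absurd h2 (castSucc_ne_last b)
  · intro h
    exact Or.inl ⟨a, b, h, rfl, rfl⟩

lemma up_adj_last {G : SimpleGraph (Fin n)} {j : Fin n} {b : Fin (n + 1)} :
    (up G j).Adj (Fin.last n) b ↔ b = j.castSucc := by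
  simp only [up, sup_adj, map_adj, fromEdgeSet_adj, Set.mem_singleton_iff]
  constructor
  · rintro (⟨a', b', _, ha, _⟩ | ⟨he, hne⟩)
    · exact absurd ha (castSucc_ne_last a')
    · rw [Sym2.eq_iff] at he
      rcases he with ⟨_, h2⟩ | ⟨h1, _⟩
      · exact h2
      · exact absurd h1.symm (castSucc_ne_last j)
  · rintro rfl
    exact Or.inr ⟨rfl, (castSucc_ne_last j).symm⟩

lemma down_up {G : SimpleGraph (Fin n)} {j : Fin n} : down (up G j) = G := by
  ext a b
  rw [down_adj, up_adj_castSucc]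

lemma neighborFinset_up_last {G : SimpleGraph (Fin n)} {j : Fin n} :
    (up G j).neighborFinset (Fin.last n) = {j.castSucc} := by
  ext b
  rw [mem_neighborFinset, up_adj_last, Finset.mem_singleton]

lemma degree_up_last {G : SimpleGraph (Fin n)} {j : Fin n} :
    (up G j).degree (Fin.last n) = 1 := by
  rw [← card_neighborFinset_eq_degree, neighborFinset_up_last, Finset.card_singleton]

lemma neighborFinset_up_castSucc {G : SimpleGraph (Fin n)} {j v : Fin n} :
    (up G j).neighborFinset v.castSucc =
      (G.neighborFinset v).map Fin.castSuccEmb ∪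
        (if v = j then {Fin.last n} else ∅) := by
  ext b
  induction b using Fin.lastCases with
  | last =>
    rw [mem_neighborFinset]
    rw [(up G j).adj_comm, up_adj_last]
    simp only [Finset.mem_union, Finset.mem_map]
    constructor
    · intro h
      have : v = j := Fin.castSucc_injective _ h
      simp [this]
    · rintro (⟨b', _, hb'⟩ | h)
      · exact absurd hb' (castSucc_ne_last b')
      · by_cases hvj : v = j
        · simp [hvj]
        · simp [hvj] at h
  | cast b' =>
    rw [mem_neighborFinset, up_adj_castSucc]
    simp only [Finset.mem_union, Finset.mem_map]
    constructor
    · intro h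
      exact Or.inl ⟨b', by simpa [mem_neighborFinset] using h, rfl⟩
    · rintro (⟨b'', hb'', he⟩ | h)
      · have : b'' = b' := Fin.castSucc_injective _ he
        rw [← this]
        rwa [mem_neighborFinset] at hb''
      · exfalso
        by_cases hvj : v = j <;> simp [hvj] at h

lemma degree_up_castSucc {G : SimpleGraph (Fin n)} {j v : Fin n} :
    (up G j).degree v.castSucc = G.degree v + (if v = j then 1 else 0) := by
  rw [← card_neighborFinset_eq_degree, neighborFinset_up_castSucc,
    Finset.card_union_of_disjoint, Finset.card_map, card_neighborFinset_eq_degree]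
  · congr 1
    by_cases hvj : v = j <;> simp [hvj]
  · rw [Finset.disjoint_right]
    intro b hb hb'
    by_cases hvj : v = j <;> simp [hvj] at hb
    subst hb
    obtain ⟨b', _, hb'⟩ := Finset.mem_map.mp hb'
    exact castSucc_ne_last b' hb'


def upHom (G : SimpleGraph (Fin n)) (j : Fin n) : G →g up G j where
  toFun := Fin.castSucc
  map_rel' := fun h => up_adj_castSucc.mpr h

lemma up_connected {G : SimpleGraph (Fin n)} {j : Fin n} (hG : G.Connected) :
    (up G j).Connected := by
  rw [connected_iff]
  refine ⟨?_, ⟨Fin.last n⟩⟩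
  have hreach : ∀ a : Fin (n + 1), (up G j).Reachable a (Fin.last n) := by
    intro a
    induction a using Fin.lastCases with
    | last => exact Reachable.refl _
    | cast a' =>
      have h1 : (up G j).Reachable a'.castSucc j.castSucc :=
        (hG.preconnected a' j).map (upHom G j)
      exact h1.trans (Adj.reachable ((up_adj_last.mpr rfl).symm))
  intro a b
  exact (hreach a).trans (hreach b).symm

lemma exists_lower {H : SimpleGraph (Fin (n + 1))} {u v : Fin (n + 1)} (p : H.Walk u v)
    (hs : ∀ x ∈ p.support, x ≠ Fin.last n) (a b : Fin n)
    (ha : u = a.castSucc) (hb : v = b.castSucc) :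
    ∃ q : (down H).Walk a b,
      q.map (SimpleGraph.Embedding.comap (Fin.castSuccEmb : Fin n ↪ Fin (n+1)) H).toHom
        = p.copy ha hb := by
  induction p generalizing a b with
  | nil =>
    subst ha
    obtain rfl : a = b := Fin.castSucc_injective _ hb
    exact ⟨Walk.nil, rfl⟩
  | @cons u' w' v' h p ih =>
    subst ha hb
    have hw : w' ≠ Fin.last n := hs w' (by simp)
    obtain ⟨c, hc⟩ := Fin.exists_castSucc_eq.mpr hw
    subst hc
    have hadj : (down H).Adj a c := h
    obtain ⟨q, hq⟩ := ih (fun x hx => hs x (by simp [hx])) c b rfl rfl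
    refine ⟨Walk.cons hadj q, ?_⟩
    change Walk.cons _ (Walk.map _ q) = _
    exact congrArg (Walk.cons h) hq

lemma up_isAcyclic {G : SimpleGraph (Fin n)} {j : Fin n} (hG : G.IsAcyclic) :
    (up G j).IsAcyclic := by
  intro v c hc
  have hL : Fin.last n ∉ c.support := isCycle_not_mem_of_degree_one hc degree_up_last
  have hv : v ≠ Fin.last n := fun h => hL (h ▸ c.start_mem_support)
  obtain ⟨a, haa⟩ := Fin.exists_castSucc_eq.mpr hv
  subst haa
  obtain ⟨q, hq⟩ := exists_lower c (fun x hx => fun hxx => hL (hxx ▸ hx)) a a rfl rfl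
  rw [Walk.copy_rfl_rfl] at hq
  have hq' : q.IsCycle := by
    have hinj : Function.Injective
        ⇑(SimpleGraph.Embedding.comap (Fin.castSuccEmb : Fin n ↪ Fin (n+1)) (up G j)).toHom :=
      (SimpleGraph.Embedding.comap _ _).injective
    refine (Walk.map_isCycle_iff_of_injective hinj).mp ?_
    rw [hq]
    exact hc
  have hd : (down (up G j)).IsAcyclic := by rw [down_up]; exact hG
  exact hd q hq'

lemma down_isAcyclic {H : SimpleGraph (Fin (n + 1))} (hH : H.IsAcyclic) :
    (down H).IsAcyclic := by
  intro a q hq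
  have hinj : Function.Injective
      ⇑(SimpleGraph.Embedding.comap (Fin.castSuccEmb : Fin n ↪ Fin (n+1)) H).toHom :=
    (SimpleGraph.Embedding.comap _ _).injective
  exact hH _ ((Walk.map_isCycle_iff_of_injective hinj).mpr hq)

lemma down_connected (hn : 1 ≤ n) {H : SimpleGraph (Fin (n + 1))} (hH : H.Connected)
    (hdeg : H.degree (Fin.last n) = 1) : (down H).Connected := by
  rw [connected_iff]
  refine ⟨fun a b => ?_, ⟨⟨0, by omega⟩⟩⟩
  obtain ⟨p⟩ := hH.preconnected a.castSucc b.castSucc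
  have hpath := (p.toPath : H.Path a.castSucc b.castSucc).2
  have hL : Fin.last n ∉ (p.toPath : H.Walk a.castSucc b.castSucc).support :=
    isPath_not_mem_of_degree_one hpath hdeg (castSucc_ne_last a) (castSucc_ne_last b)
  obtain ⟨q, _⟩ := exists_lower (p.toPath : H.Walk a.castSucc b.castSucc)
    (fun x hx => fun hxx => hL (hxx ▸ hx)) a b rfl rfl
  exact ⟨q⟩

lemma up_down {H : SimpleGraph (Fin (n + 1))} {j : Fin n}
    (hadj : H.Adj (Fin.last n) j.castSucc) (hdeg : H.degree (Fin.last n) = 1) :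
    up (down H) j = H := by
  ext a b
  induction a using Fin.lastCases with
  | last =>
    rw [up_adj_last]
    constructor
    · rintro rfl; exact hadj
    · intro h; exact adj_eq_of_degree_eq_one hdeg h hadj
  | cast a' =>
    induction b using Fin.lastCases with
    | last =>
      rw [(up (down H) j).adj_comm, H.adj_comm, up_adj_last]
      constructor
      · intro h
        obtain rfl : a' = j := Fin.castSucc_injective _ h
        exact hadj
      · intro h
        exact adj_eq_of_degree_eq_one hdeg h hadj
    | cast b' =>
      rw [up_adj_castSucc]
      exact Iff.rfl


-- iso transfer
lemma iso_isAcyclic {V W : Type*} {G : SimpleGraph V} {H : SimpleGraph W}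
    (ψ : G ≃g H) (h : H.IsAcyclic) : G.IsAcyclic := by
  intro v p hp
  have hinj : Function.Injective ⇑ψ.toHom := ψ.toEquiv.injective
  exact h _ ((Walk.map_isCycle_iff_of_injective hinj).mpr hp)

lemma iso_degree {V W : Type*} [Fintype V] [Fintype W] {G : SimpleGraph V} {H : SimpleGraph W}
    (ψ : G ≃g H) (v : V) : G.degree v = H.degree (ψ v) := by
  rw [← card_neighborSet_eq_degree, ← card_neighborSet_eq_degree]
  exact Fintype.card_congr (ψ.mapNeighborSet v)

lemma treeSet_card_comp_equiv (c : Fin n → ℕ) (e : Fin n ≃ Fin n) :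
    (treeSet n (c ∘ e)).card = (treeSet n c).card := by
  refine Finset.card_bij' (fun G _ => G.comap ⇑(e.symm.toEmbedding))
    (fun G _ => G.comap ⇑(e.toEmbedding)) ?_ ?_ ?_ ?_
  · intro G hG
    rw [mem_treeSet] at hG ⊢
    obtain ⟨⟨hc, ha⟩, hd⟩ := hG
    refine ⟨⟨(Iso.connected_iff (SimpleGraph.Iso.comap e.symm G)).mpr hc,
      iso_isAcyclic (SimpleGraph.Iso.comap e.symm G) ha⟩, ?_⟩
    intro v
    rw [Equiv.coe_toEmbedding, iso_degree (SimpleGraph.Iso.comap e.symm G) v, Iso.comap_apply, hd (e.symm v)]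
    simp
  · intro G hG
    rw [mem_treeSet] at hG ⊢
    obtain ⟨⟨hc, ha⟩, hd⟩ := hG
    refine ⟨⟨(Iso.connected_iff (SimpleGraph.Iso.comap e G)).mpr hc,
      iso_isAcyclic (SimpleGraph.Iso.comap e G) ha⟩, ?_⟩
    intro v
    rw [Equiv.coe_toEmbedding, iso_degree (SimpleGraph.Iso.comap e G) v, Iso.comap_apply, hd (e v)]
    rfl
  · intro G _
    ext a b
    simp [comap_adj]
  · intro G _
    ext a b
    simp [comap_adj]


lemma step1 (hn : 2 ≤ n) (c : Fin (n + 1) → ℕ) (hlast : c (Fin.last n) = 1) :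
    (treeSet (n + 1) c).card =
      ∑ j : Fin n, (treeSet n (fun v => c v.castSucc - if v = j then 1 else 0)).card := by
  have hne : Nonempty (Fin n) := ⟨⟨0, by omega⟩⟩
  -- each tree in the set has a unique j with Adj last j.castSucc
  have hex : ∀ T ∈ treeSet (n + 1) c, ∃ j : Fin n, T.Adj (Fin.last n) j.castSucc := by
    intro T hT
    rw [mem_treeSet] at hT
    have hd1 : T.degree (Fin.last n) = 1 := (hT.2 _).trans hlast
    have hpos : 0 < T.degree (Fin.last n) := by omega
    rw [degree_pos_iff_exists_adj] at hpos
    obtain ⟨w, hw⟩ := hpos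
    have hwne : w ≠ Fin.last n := hw.ne'
    obtain ⟨j, hj⟩ := Fin.exists_castSucc_eq.mpr hwne
    exact ⟨j, hj ▸ hw⟩
  set f : SimpleGraph (Fin (n + 1)) → Fin n := fun T =>
    if h : ∃ j : Fin n, T.Adj (Fin.last n) j.castSucc then h.choose else Classical.arbitrary _
    with hf
  rw [Finset.card_eq_sum_card_fiberwise (f := f) (t := Finset.univ) (fun T _ => mem_univ _)]
  refine Finset.sum_congr rfl (fun j _ => ?_)
  have hfilter : (treeSet (n + 1) c).filter (fun T => f T = j)
      = (treeSet (n + 1) c).filter (fun T => T.Adj (Fin.last n) j.castSucc) := by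
    ext T
    simp only [mem_filter, and_congr_right_iff]
    intro hT
    have h := hex T hT
    have hd1 : T.degree (Fin.last n) = 1 := ((mem_treeSet.mp hT).2 _).trans hlast
    rw [hf]
    simp only [dif_pos h]
    constructor
    · rintro rfl
      exact h.choose_spec
    · intro hadj
      have := adj_eq_of_degree_eq_one hd1 h.choose_spec hadj
      exact Fin.castSucc_injective _ this
  rw [hfilter]
  refine Finset.card_bij' (fun T _ => down T) (fun G _ => up G j) ?_ ?_ ?_ ?_
  · -- down maps into treeSet n c'
    intro T hT
    rw [mem_filter, mem_treeSet] at hT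
    obtain ⟨⟨⟨hconn, hacyc⟩, hdeg⟩, hadj⟩ := hT
    have hd1 : T.degree (Fin.last n) = 1 := (hdeg _).trans hlast
    have hud : up (down T) j = T := up_down hadj hd1
    rw [mem_treeSet]
    refine ⟨⟨down_connected (by omega) hconn hd1, down_isAcyclic hacyc⟩, ?_⟩
    intro v
    have h1 : (up (down T) j).degree v.castSucc
        = (down T).degree v + (if v = j then 1 else 0) := degree_up_castSucc
    rw [hud] at h1
    rw [hdeg v.castSucc] at h1
    by_cases hvj : v = j <;> simp [hvj] at h1 ⊢ <;> omega
  · -- up maps into the filter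
    intro G hG
    rw [mem_treeSet] at hG
    obtain ⟨⟨hconn, hacyc⟩, hdeg⟩ := hG
    rw [mem_filter, mem_treeSet]
    refine ⟨⟨⟨up_connected hconn, up_isAcyclic hacyc⟩, ?_⟩, up_adj_last.mpr rfl⟩
    intro w
    induction w using Fin.lastCases with
    | last => rw [degree_up_last, hlast]
    | cast v =>
      rw [degree_up_castSucc, hdeg v]
      have hposd : 0 < G.degree j := degree_pos hn hconn j
      have hdj := hdeg j
      by_cases hvj : v = j <;> simp [hvj] at hdj ⊢ <;> omega
  · intro T hT
    rw [mem_filter, mem_treeSet] at hT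
    obtain ⟨⟨_, hdeg⟩, hadj⟩ := hT
    exact up_down hadj ((hdeg _).trans hlast)
  · intro G _
    exact down_up


lemma treeSet_empty_of_deg_zero (hn : 2 ≤ n) {c : Fin n → ℕ} {v0 : Fin n} (h0 : c v0 = 0) :
    treeSet n c = ∅ := by
  rw [Finset.eq_empty_iff_forall_notMem]
  intro G hG
  rw [mem_treeSet] at hG
  have := degree_pos hn hG.1.1 v0
  rw [hG.2 v0, h0] at this
  omega

lemma base_two (c : Fin 2 → ℕ) (hc : ∀ v, c v = 1) : (treeSet 2 c).card = 1 := by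
  have htop : (⊤ : SimpleGraph (Fin 2)) ∈ treeSet 2 c := by
    rw [mem_treeSet]
    refine ⟨⟨connected_top, ?_⟩, ?_⟩
    · intro v p hp
      have h3 := hp.three_le_length
      have hnodup := hp.2
      have hlen : p.support.tail.length = p.length := by
        have := p.length_support
        have h2 : p.support.tail.length = p.support.length - 1 := by
          simp [List.length_tail]
        omega
      have hle := hnodup.length_le_card
      rw [hlen] at hle
      rw [Fintype.card_fin] at hle
      omega
    · intro v
      rw [hc v]
      rw [← card_neighborFinset_eq_degree]
      have hadj : ∀ v w : Fin 2, ((⊤ : SimpleGraph (Fin 2)).Adj v w ↔ w = v + 1) := by decide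
      rw [Finset.card_eq_one]
      refine ⟨v + 1, ?_⟩
      ext w
      rw [mem_neighborFinset, Finset.mem_singleton, hadj]
  have huniq : ∀ G ∈ treeSet 2 c, G = (⊤ : SimpleGraph (Fin 2)) := by
    intro G hG
    rw [mem_treeSet] at hG
    have h01 : G.Adj 0 1 := by
      obtain ⟨p⟩ := hG.1.1.preconnected (0 : Fin 2) 1
      cases p with
      | @cons _ w _ h p' =>
        have hw : w = 1 := by
          have := h.ne
          omega
        rwa [hw] at h
    ext a b
    simp only [top_adj]
    constructor
    · exact fun h => h.ne
    · intro hab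
      have : (a = 0 ∧ b = 1) ∨ (a = 1 ∧ b = 0) := by omega
      rcases this with ⟨ha, hb⟩ | ⟨ha, hb⟩
      · rw [ha, hb]; exact h01
      · rw [ha, hb]; exact h01.symm
  rw [Finset.eq_singleton_iff_unique_mem.mpr ⟨htop, huniq⟩]
  exact Finset.card_singleton _

lemma main_count : ∀ n, 2 ≤ n → ∀ (c : Fin n → ℕ), (∀ v, 1 ≤ c v) → (∑ v, c v = 2 * n - 2) →
    (treeSet n c).card * ∏ v, (c v - 1).factorial = (n - 2).factorial := by
  intro n hn
  induction n, hn using Nat.le_induction with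
  | base =>
    intro c hc1 hcs
    have h2 : c 0 + c 1 = 2 := by
      rw [← Fin.sum_univ_two c]; omega
    have hc : ∀ v, c v = 1 := by
      rw [Fin.forall_fin_two]
      have := hc1 0
      have := hc1 1
      omega
    rw [base_two c hc]
    simp [hc]
  | succ n hn ih =>
    intro c hc1 hcs
    -- find a leaf position
    have hv0 : ∃ v0, c v0 = 1 := by
      by_contra hno
      push_neg at hno
      have h2 : ∀ v, 2 ≤ c v := fun v => by
        have := hc1 v
        have := hno v
        omega
      have : 2 * (n + 1) ≤ ∑ v, c v := by
        calc 2 * (n + 1) = ∑ _v : Fin (n + 1), 2 := by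
              rw [Finset.sum_const, Finset.card_univ, Fintype.card_fin]; ring
          _ ≤ ∑ v, c v := Finset.sum_le_sum (fun v _ => h2 v)
      omega
    obtain ⟨v0, hv0⟩ := hv0
    -- WLOG the leaf is at the last position
    set e : Fin (n + 1) ≃ Fin (n + 1) := Equiv.swap v0 (Fin.last n) with he
    set c' : Fin (n + 1) → ℕ := c ∘ e with hc'
    have hlast : c' (Fin.last n) = 1 := by
      rw [hc']
      simp [he, Equiv.swap_apply_right, hv0]
    have hcard : (treeSet (n + 1) c').card = (treeSet (n + 1) c).card :=
      treeSet_card_comp_equiv c e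
    have hprod : ∏ v, (c' v - 1).factorial = ∏ v, (c v - 1).factorial :=
      Equiv.prod_comp e (fun v => (c v - 1).factorial)
    have hsum' : ∑ v, c' v = 2 * (n + 1) - 2 := by
      rw [hc', ← hcs]
      exact Equiv.sum_comp e c
    have hc1' : ∀ v, 1 ≤ c' v := fun v => hc1 (e v)
    rw [← hcard, ← hprod]
    -- now use step1
    rw [step1 hn c' hlast]
    set b : Fin n → ℕ := fun v => c' v.castSucc with hb
    have hb1 : ∀ v, 1 ≤ b v := fun v => hc1' v.castSucc
    have hsumb : ∑ v, b v = 2 * n - 1 := by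
      have := Fin.sum_univ_castSucc c'
      rw [hlast] at this
      rw [hsum'] at this
      have hbs : ∑ v, b v = ∑ v : Fin n, c' v.castSucc := rfl
      omega
    have hprodsplit : ∏ v : Fin (n + 1), (c' v - 1).factorial
        = ∏ v : Fin n, (b v - 1).factorial := by
      rw [Fin.prod_univ_castSucc (fun v => (c' v - 1).factorial), hlast]
      simp
      rfl
    rw [hprodsplit]
    rw [Finset.sum_mul]
    have hterm : ∀ j : Fin n,
        (treeSet n (fun v => c' v.castSucc - if v = j then 1 else 0)).card
          * ∏ v : Fin n, (b v - 1).factorial = (b j - 1) * (n - 2).factorial := by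
      intro j
      set cj : Fin n → ℕ := fun v => c' v.castSucc - if v = j then 1 else 0 with hcj
      by_cases hbj : b j = 1
      · -- the modified degree at j is zero, so the set is empty
        have hz : cj j = 0 := by
          have hd : c' j.castSucc = b j := rfl
          rw [hcj]
          simp
          omega
        rw [treeSet_empty_of_deg_zero hn hz]
        rw [hbj]
        simp
      · have hbj2 : 2 ≤ b j := by
          have := hb1 j
          omega
        have hcj1 : ∀ v, 1 ≤ cj v := by
          intro v
          rw [hcj]
          have hd : c' v.castSucc = b v := rfl
          have := hb1 v
          by_cases hvj : v = j
          · subst hvj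
            simp
            all_goals omega
          · simp only [if_neg hvj]
            omega
        have hcjs : ∑ v, cj v = 2 * n - 2 := by
          have hsplit : ∀ v, cj v + (if v = j then 1 else 0) = b v := by
            intro v
            have hd : c' v.castSucc = b v := rfl
            rw [hcj]
            have := hb1 v
            by_cases hvj : v = j
            · subst hvj
              simp
              all_goals omega
            · simp only [if_neg hvj]
              all_goals omega
          have h1 : ∑ v, (cj v + if v = j then 1 else 0) = ∑ v, b v :=
            Finset.sum_congr rfl (fun v _ => hsplit v)
          rw [Finset.sum_add_distrib] at h1
          have h2 : (∑ v : Fin n, if v = j then 1 else 0) = 1 := by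
            simp [Finset.sum_ite_eq']
          omega
        have hih := ih cj hcj1 hcjs
        -- relate the two products
        have hpr : ∏ v : Fin n, (b v - 1).factorial
            = (b j - 1) * ∏ v : Fin n, (cj v - 1).factorial := by
          rw [← Finset.mul_prod_erase Finset.univ _ (Finset.mem_univ j),
            ← Finset.mul_prod_erase Finset.univ (fun v => (cj v - 1).factorial)
              (Finset.mem_univ j)]
          have hsame : ∏ v ∈ Finset.univ.erase j, (b v - 1).factorial
              = ∏ v ∈ Finset.univ.erase j, (cj v - 1).factorial := by
            refine Finset.prod_congr rfl (fun v hv => ?_)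
            have hvj : v ≠ j := (Finset.mem_erase.mp hv).1
            have hd : c' v.castSucc = b v := rfl
            rw [hcj]
            simp only [if_neg hvj, Nat.sub_zero, hd]
          rw [hsame]
          have hcjj : cj j - 1 = b j - 2 := by
            have hd : c' j.castSucc = b j := rfl
            rw [hcj]
            simp
            omega
          rw [hcjj]
          have hfac : (b j - 1).factorial = (b j - 1) * (b j - 2).factorial := by
            have h : b j - 1 = (b j - 2) + 1 := by omega
            rw [h, Nat.factorial_succ]
            all_goals (congr 1; omega)
          rw [hfac]
          ring
        rw [hpr, ← mul_assoc, mul_comm _ (b j - 1), mul_assoc, hih]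
    rw [Finset.sum_congr rfl (fun j _ => hterm j)]
    rw [← Finset.sum_mul]
    have hsb : ∑ j : Fin n, (b j - 1) = n - 1 := by
      have h1 : ∑ j : Fin n, ((b j - 1) + 1) = ∑ j, b j :=
        Finset.sum_congr rfl (fun j _ => by have := hb1 j; omega)
      rw [Finset.sum_add_distrib] at h1
      simp only [Finset.sum_const, Finset.card_univ, Fintype.card_fin, smul_eq_mul, mul_one] at h1
      omega
    rw [hsb]
    have h3 : n + 1 - 2 = n - 1 := by omega
    have h4 : n - 1 = (n - 2) + 1 := by omega
    rw [h3, h4, Nat.factorial_succ]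


lemma treeSet_card_zero (hn : 2 ≤ n) (c : Fin n → ℕ)
    (h : ¬((∀ v, 1 ≤ c v) ∧ ∑ v, c v = 2 * n - 2)) : (treeSet n c).card = 0 := by
  rw [Finset.card_eq_zero, Finset.eq_empty_iff_forall_notMem]
  intro G hG
  rw [mem_treeSet] at hG
  refine h ⟨fun v => ?_, ?_⟩
  · have := degree_pos hn hG.1.1 v
    rw [hG.2 v] at this
    omega
  · have hds := degree_sum hG.1.1 hG.1.2
    have heq : ∑ v, G.degree v = ∑ v, c v := Finset.sum_congr rfl (fun v _ => hG.2 v)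
    omega


end TreeCount

/-- For a positive integer `d` and `n ≥ 2`, with `X_d(T)` the number
of vertices of degree `d` of a labeled tree `T` on `Fin n`, the polynomial
`∑_T g^(X_d(T))` in `ℚ[g]` equals `(n-2)!` times the coefficient of `z^(n-2)` in the
power series `(e^z + (g-1)·z^(d-1)/(d-1)!)^n` with coefficients in `ℚ[g]`. -/
theorem prob_gen_function_X_d (d : ℕ) (hd : 0 < d) (n : ℕ) (hn : 2 ≤ n) :
    (∑ G ∈ Finset.univ.filter (fun G : SimpleGraph (Fin n) =>
        G.Connected ∧ G.IsAcyclic),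
      (Polynomial.X : Polynomial ℚ) ^
        (Finset.univ.filter (fun v : Fin n => G.degree v = d)).card) =
      (Nat.factorial (n - 2) : Polynomial ℚ) *
        PowerSeries.coeff (R := Polynomial ℚ) (n - 2)
          ((PowerSeries.exp (Polynomial ℚ) +
              PowerSeries.monomial (R := Polynomial ℚ) (d - 1)
                ((Polynomial.X - 1) *
                  Polynomial.C ((1 : ℚ) / (Nat.factorial (d - 1))))) ^ n) := by
  have hcoeff : ∀ k : ℕ, PowerSeries.coeff (R := Polynomial ℚ) k
      (PowerSeries.exp (Polynomial ℚ) +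
        PowerSeries.monomial (R := Polynomial ℚ) (d - 1)
          ((Polynomial.X - 1) * Polynomial.C ((1 : ℚ) / (Nat.factorial (d - 1)))))
      = Polynomial.C ((1 : ℚ) / k.factorial) * (if k = d - 1 then Polynomial.X else 1) := by
    intro k
    rw [map_add, PowerSeries.coeff_exp, PowerSeries.coeff_monomial, Polynomial.algebraMap_eq]
    by_cases hk : k = d - 1
    · subst hk
      rw [if_pos rfl, if_pos rfl]
      ring
    · rw [if_neg hk, if_neg hk, add_zero, mul_one]
  have hpow : PowerSeries.coeff (R := Polynomial ℚ) (n - 2)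
      ((PowerSeries.exp (Polynomial ℚ) +
        PowerSeries.monomial (R := Polynomial ℚ) (d - 1)
          ((Polynomial.X - 1) * Polynomial.C ((1 : ℚ) / (Nat.factorial (d - 1))))) ^ n)
      = ∑ l ∈ (Finset.range n).finsuppAntidiag (n - 2),
          ∏ i ∈ Finset.range n, (Polynomial.C ((1 : ℚ) / (l i).factorial) *
            (if l i = d - 1 then Polynomial.X else 1)) := by
    rw [PowerSeries.coeff_pow]
    exact Finset.sum_congr rfl (fun l _ => Finset.prod_congr rfl (fun i _ => hcoeff (l i)))
  rw [hpow]
  have hdeglt : ∀ (G : SimpleGraph (Fin n)) (v : Fin n), G.degree v < n := by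
    intro G v
    have := G.degree_lt_card_verts v
    rwa [Fintype.card_fin] at this
  have hLHS : (∑ G ∈ Finset.univ.filter (fun G : SimpleGraph (Fin n) =>
        G.Connected ∧ G.IsAcyclic),
      (Polynomial.X : Polynomial ℚ) ^
        (Finset.univ.filter (fun v : Fin n => G.degree v = d)).card)
      = ∑ cf : Fin n → Fin n,
          ((TreeCount.treeSet n (fun v => (cf v : ℕ))).card : Polynomial ℚ) *
            ∏ v, (if (cf v : ℕ) = d then (Polynomial.X : Polynomial ℚ) else 1) := by
    rw [← Finset.sum_fiberwise_of_maps_to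
      (g := fun (G : SimpleGraph (Fin n)) => (fun v => (⟨G.degree v, hdeglt G v⟩ : Fin n)))
      (t := Finset.univ) (fun G _ => Finset.mem_univ _)]
    refine Finset.sum_congr rfl (fun cf _ => ?_)
    have hfib : (Finset.univ.filter (fun G : SimpleGraph (Fin n) =>
          G.Connected ∧ G.IsAcyclic)).filter
        (fun G => (fun v => (⟨G.degree v, hdeglt G v⟩ : Fin n)) = cf)
          = TreeCount.treeSet n (fun v => (cf v : ℕ)) := by
      ext G
      rw [Finset.mem_filter, Finset.mem_filter, TreeCount.mem_treeSet]
      constructor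
      · rintro ⟨⟨_, h1⟩, h2⟩
        refine ⟨h1, fun v => ?_⟩
        exact congrArg Fin.val (congrFun h2 v)
      · rintro ⟨h1, h2⟩
        exact ⟨⟨Finset.mem_univ _, h1⟩, funext fun v => Fin.ext (h2 v)⟩
    rw [hfib]
    have hterm : ∀ G ∈ TreeCount.treeSet n (fun v => (cf v : ℕ)),
        (Polynomial.X : Polynomial ℚ) ^
          (Finset.univ.filter (fun v : Fin n => G.degree v = d)).card
        = ∏ v, (if (cf v : ℕ) = d then (Polynomial.X : Polynomial ℚ) else 1) := by
      intro G hG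
      rw [TreeCount.mem_treeSet] at hG
      have h1 : (∏ v : Fin n, (if G.degree v = d then (Polynomial.X : Polynomial ℚ) else 1))
          = (Polynomial.X : Polynomial ℚ) ^
            (Finset.univ.filter (fun v : Fin n => G.degree v = d)).card := by
        rw [Finset.prod_ite, Finset.prod_const, Finset.prod_const_one, mul_one]
      rw [← h1]
      exact Finset.prod_congr rfl (fun v _ => by rw [hG.2 v])
    rw [Finset.sum_congr rfl hterm, Finset.sum_const, nsmul_eq_mul]
  rw [hLHS]
  set P : (Fin n → Fin n) → Prop :=
    fun cf => (∀ v, 1 ≤ (cf v : ℕ)) ∧ ∑ v, (cf v : ℕ) = 2 * n - 2 with hP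
  rw [← Finset.sum_filter_add_sum_filter_not Finset.univ P]
  have hzero : ∑ cf ∈ Finset.univ.filter (fun cf => ¬ P cf),
      ((TreeCount.treeSet n (fun v => (cf v : ℕ))).card : Polynomial ℚ) *
        ∏ v, (if (cf v : ℕ) = d then (Polynomial.X : Polynomial ℚ) else 1) = 0 := by
    refine Finset.sum_eq_zero (fun cf hcf => ?_)
    rw [Finset.mem_filter] at hcf
    rw [TreeCount.treeSet_card_zero hn _ hcf.2]
    simp
  rw [hzero, add_zero, Finset.mul_sum]
  have hbound : ∀ l ∈ (Finset.range n).finsuppAntidiag (n - 2), ∀ v : Fin n,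
      l (v : ℕ) + 1 < n := by
    intro l hl v
    rw [Finset.mem_finsuppAntidiag] at hl
    have hle : l (v : ℕ) ≤ n - 2 := by
      rw [← hl.1]
      exact Finset.single_le_sum (fun i _ => Nat.zero_le _) (Finset.mem_range.mpr v.isLt)
    omega
  refine Finset.sum_bij' (i := fun cf _ => Finsupp.onFinset (Finset.range n)
      (fun i => if h : i < n then ((cf ⟨i, h⟩ : ℕ) - 1) else 0)
      (fun a ha => Finset.mem_range.mpr (by by_contra h; exact ha (dif_neg h))))
    (j := fun l hl => fun v => (⟨l (v : ℕ) + 1, hbound l hl v⟩ : Fin n)) ?_ ?_ ?_ ?_ ?_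
  · -- i maps into t
    intro cf hcf
    rw [Finset.mem_filter, hP] at hcf
    obtain ⟨-, h1, h2⟩ := hcf
    rw [Finset.mem_finsuppAntidiag]
    refine ⟨?_, Finsupp.support_onFinset_subset⟩
    have hstep : ∑ i ∈ Finset.range n,
        (Finsupp.onFinset (Finset.range n)
          (fun i => if h : i < n then ((cf ⟨i, h⟩ : ℕ) - 1) else 0)
          (fun a ha => Finset.mem_range.mpr (by by_contra h; exact ha (dif_neg h)))) i
        = ∑ v : Fin n, ((cf v : ℕ) - 1) := by
      rw [Finset.sum_range]
      refine Finset.sum_congr rfl (fun v _ => ?_)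
      rw [Finsupp.onFinset_apply, dif_pos v.isLt]
    rw [hstep]
    have hplus : ∑ v : Fin n, (((cf v : ℕ) - 1) + 1) = ∑ v : Fin n, (cf v : ℕ) :=
      Finset.sum_congr rfl (fun v _ => by have := h1 v; omega)
    rw [Finset.sum_add_distrib] at hplus
    simp only [Finset.sum_const, Finset.card_univ, Fintype.card_fin, smul_eq_mul,
      mul_one] at hplus
    omega
  · -- j maps into s
    intro l hl
    have hl' := hl
    rw [Finset.mem_finsuppAntidiag] at hl'
    rw [Finset.mem_filter, hP]
    refine ⟨Finset.mem_univ _, fun v => Nat.le_add_left 1 _, ?_⟩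
    have hstep : ∑ v : Fin n, ((⟨l (v : ℕ) + 1, hbound l hl v⟩ : Fin n) : ℕ)
        = ∑ v : Fin n, (l (v : ℕ) + 1) := rfl
    rw [hstep, Finset.sum_add_distrib]
    simp only [Finset.sum_const, Finset.card_univ, Fintype.card_fin, smul_eq_mul, mul_one]
    have : ∑ v : Fin n, l (v : ℕ) = n - 2 := by
      rw [← Finset.sum_range (fun i => l i)]
      exact hl'.1
    omega
  · -- j ∘ i = id
    intro cf hcf
    rw [Finset.mem_filter, hP] at hcf
    funext v
    apply Fin.ext
    show (Finsupp.onFinset (Finset.range n) _ _) (v : ℕ) + 1 = (cf v : ℕ)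
    rw [Finsupp.onFinset_apply, dif_pos v.isLt]
    have h1v := hcf.2.1 v
    simp only [Fin.eta]
    omega
  · -- i ∘ j = id
    intro l hl
    have hl' := hl
    rw [Finset.mem_finsuppAntidiag] at hl'
    ext a
    rw [Finsupp.onFinset_apply]
    by_cases h : a < n
    · rw [dif_pos h]
      simp
    · rw [dif_neg h]
      have hns : a ∉ l.support := fun hc => h (Finset.mem_range.mp (hl'.2 hc))
      rw [Finsupp.notMem_support_iff] at hns
      omega
  · -- term equality
    intro cf hcf
    rw [Finset.mem_filter, hP] at hcf
    obtain ⟨-, h1, h2⟩ := hcf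
    have hkey := TreeCount.main_count n hn (fun v => (cf v : ℕ)) h1 h2
    have hne : (∏ v : Fin n, (((cf v : ℕ) - 1).factorial : ℚ)) ≠ 0 :=
      Finset.prod_ne_zero_iff.mpr (fun v _ => Nat.cast_ne_zero.mpr (Nat.factorial_ne_zero _))
    have hQ : ((TreeCount.treeSet n (fun v => (cf v : ℕ))).card : ℚ)
        = ((n - 2).factorial : ℚ) * ∏ v : Fin n, ((1 : ℚ) / ((cf v : ℕ) - 1).factorial) := by
      have hcast : ((TreeCount.treeSet n (fun v => (cf v : ℕ))).card : ℚ)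
          * ∏ v : Fin n, (((cf v : ℕ) - 1).factorial : ℚ) = (((n : ℕ) - 2).factorial : ℚ) := by
        rw [← Nat.cast_prod, ← Nat.cast_mul, hkey]
      rw [← hcast, mul_assoc, ← Finset.prod_mul_distrib]
      have hone : ∀ v : Fin n, ((((cf v : ℕ) - 1).factorial : ℚ))
          * ((1 : ℚ) / ((cf v : ℕ) - 1).factorial) = 1 := by
        intro v
        field_simp
      rw [Finset.prod_congr rfl (fun v _ => hone v), Finset.prod_const_one, mul_one]
    have hNC : ((TreeCount.treeSet n (fun v => (cf v : ℕ))).card : Polynomial ℚ)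
        = ((n - 2).factorial : Polynomial ℚ)
            * ∏ v : Fin n, Polynomial.C ((1 : ℚ) / ((cf v : ℕ) - 1).factorial) := by
      calc ((TreeCount.treeSet n (fun v => (cf v : ℕ))).card : Polynomial ℚ)
          = Polynomial.C (((TreeCount.treeSet n (fun v => (cf v : ℕ))).card : ℚ)) :=
            (Polynomial.C_eq_natCast _).symm
        _ = Polynomial.C (((n - 2).factorial : ℚ))
              * ∏ v : Fin n, Polynomial.C ((1 : ℚ) / ((cf v : ℕ) - 1).factorial) := by
            rw [hQ, map_mul, map_prod]
        _ = ((n - 2).factorial : Polynomial ℚ)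
              * ∏ v : Fin n, Polynomial.C ((1 : ℚ) / ((cf v : ℕ) - 1).factorial) := by
            rw [Polynomial.C_eq_natCast]
    have hprodrange : ∏ i ∈ Finset.range n,
        (Polynomial.C ((1 : ℚ) / (((Finsupp.onFinset (Finset.range n)
            (fun i => if h : i < n then ((cf ⟨i, h⟩ : ℕ) - 1) else 0)
            (fun a ha => Finset.mem_range.mpr (by by_contra h; exact ha (dif_neg h)))) i).factorial))
          * (if (Finsupp.onFinset (Finset.range n)
            (fun i => if h : i < n then ((cf ⟨i, h⟩ : ℕ) - 1) else 0)
            (fun a ha => Finset.mem_range.mpr (by by_contra h; exact ha (dif_neg h)))) i = d - 1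
            then (Polynomial.X : Polynomial ℚ) else 1))
        = ∏ v : Fin n, (Polynomial.C ((1 : ℚ) / (((cf v : ℕ) - 1).factorial))
            * (if (cf v : ℕ) - 1 = d - 1 then (Polynomial.X : Polynomial ℚ) else 1)) := by
      rw [← Fin.prod_univ_eq_prod_range]
      refine Finset.prod_congr rfl (fun v _ => ?_)
      rw [Finsupp.onFinset_apply, dif_pos v.isLt]
    have hite : ∀ v : Fin n, (if (cf v : ℕ) - 1 = d - 1 then (Polynomial.X : Polynomial ℚ) else 1)
        = (if (cf v : ℕ) = d then (Polynomial.X : Polynomial ℚ) else 1) := by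
      intro v
      have h1v := h1 v
      by_cases hcd : (cf v : ℕ) = d
      · rw [if_pos hcd, if_pos (by omega)]
      · rw [if_neg hcd, if_neg (by omega)]
    rw [hprodrange, hNC, Finset.prod_mul_distrib,
      Finset.prod_congr rfl (fun v _ => hite v)]
    ring
end
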